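/- Let c ≥ 2 and let g, h : ℝ^d → ℝ^c be functions whose components satisfy 0 ≤ g_i(x) ≤ 1 and 0 ≤ h_i(x) ≤ 1 for all x ∈ ℝ^d and all i ∈ {1,…,c}. Fix a norm ‖·‖ on ℝ^d, a point x ∈ ℝ^d, a radius r ≥ 0, and α ∈ [1/2, 1]. Let y ∈ {1,…,c} satisfy h_y(x) ≥ h_i(x) for all i. Suppose h is certifiably robust at x with margin (1−α)/α and radius r, i.e., h_y(x+δ) ≥ h_i(x+δ) + (1−α)/α for all i ≠ y and all δ ∈ ℝ^d with ‖δ‖ ≤ r. Then for all δ ∈ ℝ^d with ‖δ‖ ≤ r and all i ∈ {1,…,c}, it holds that (1−α)·g_y(x+δ) + α·h_y(x+δ) ≥ (1−α)·g_i(x+δ) + α·h_i(x+δ); that is, the mixed classifier h^α still predicts class y on x+δ. -/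
import Mathlib


/-- **Mixed classifier robustness (Lemma 1).**
If the robust base classifier `h` is certifiably robust at `x` with margin `(1-α)/α` and
radius `r`, and `α ∈ [1/2, 1]`, then the mixed classifier
`h^α_i = log ((1-α) g_i + α h_i)` still predicts class `y = argmax_i h_i(x)` on every
perturbed input `x + δ` with `‖δ‖ ≤ r`. -/
theorem mixed_classifier_robust
    {d c : ℕ} (hc : 2 ≤ c)
    (N : (Fin d → ℝ) → ℝ)                      -- a fixed norm on ℝ^d
    (g h : (Fin d → ℝ) → Fin c → ℝ)
    (hg : ∀ x i, g x i ∈ Set.Icc (0 : ℝ) 1)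
    (hh : ∀ x i, h x i ∈ Set.Icc (0 : ℝ) 1)
    (x : Fin d → ℝ) (r : ℝ) (hr : 0 ≤ r)
    (α : ℝ) (hα : α ∈ Set.Icc (1 / 2 : ℝ) 1)
    (y : Fin c) (hy : ∀ i, h x i ≤ h x y)
    (hrob : ∀ i, i ≠ y → ∀ δ : Fin d → ℝ, N δ ≤ r →
      h (x + δ) i + (1 - α) / α ≤ h (x + δ) y) :
    ∀ δ : Fin d → ℝ, N δ ≤ r → ∀ i : Fin c,
      (1 - α) * g (x + δ) i + α * h (x + δ) i ≤
        (1 - α) * g (x + δ) y + α * h (x + δ) y := by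
  intro δ hδ i
  by_cases hiy : i = y
  · subst hiy; exact le_refl _
  · have hrb := hrob i hiy δ hδ
    have hgi := hg (x + δ) i
    have hgy := hg (x + δ) y
    have hα0 : (0:ℝ) < α := by linarith [hα.1]
    have key : α * ((1 - α) / α) = 1 - α := by field_simp
    nlinarith [mul_le_mul_of_nonneg_left hrb hα0.le, hgi.1, hgi.2, hgy.1, hgy.2, hα.1, hα.2]
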